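/- Let p be a positive integer and let f : ℝ^p → ℝ be convex and L-smooth with L > 0. Then for all x, y ∈ ℝ^p, ⟨∇f(x) − ∇f(y), x − y⟩ ≥ (1/L)·‖∇f(x) − ∇f(y)‖² (co-coercivity of the gradient). -/

import Mathlib

open RealInnerProductSpace

/-- `x` is a proximal point of `φ` at `y` with parameter `γ`:
it minimizes `u ↦ φ u + (1/(2γ)) ‖u - y‖²`. -/
def IsProxPt {p : ℕ} (γ : ℝ) (φ : EuclideanSpace ℝ (Fin p) → ℝ)
    (y x : EuclideanSpace ℝ (Fin p)) : Prop :=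
  ∀ u : EuclideanSpace ℝ (Fin p),
    φ x + (1 / (2 * γ)) * ‖x - y‖ ^ 2 ≤ φ u + (1 / (2 * γ)) * ‖u - y‖ ^ 2

/-- `(x, z)` is a three-operator splitting step from `y`. -/
def IsSplitStep {p : ℕ} (γ : ℝ) (g h f : EuclideanSpace ℝ (Fin p) → ℝ)
    (y x z : EuclideanSpace ℝ (Fin p)) : Prop :=
  IsProxPt γ g y x ∧ IsProxPt γ h ((2 : ℝ) • x - y - γ • gradient f x) z

/-- `f` is `L`-smooth: differentiable with `L`-Lipschitz gradient. -/
def LSmooth {p : ℕ} (L : ℝ) (f : EuclideanSpace ℝ (Fin p) → ℝ) : Prop :=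
  Differentiable ℝ f ∧ ∀ a b : EuclideanSpace ℝ (Fin p),
    ‖gradient f a - gradient f b‖ ≤ L * ‖a - b‖

/-- `u` is a subgradient of `φ` at `x`. -/
def IsSubgradient {p : ℕ} (φ : EuclideanSpace ℝ (Fin p) → ℝ)
    (x u : EuclideanSpace ℝ (Fin p)) : Prop :=
  ∀ w : EuclideanSpace ℝ (Fin p), φ w ≥ φ x + ⟪u, w - x⟫

section Aux
open Set
variable {E : Type*} [NormedAddCommGroup E] [InnerProductSpace ℝ E] [CompleteSpace E]

lemma lineDeriv_aux (f : E → ℝ) (hd : Differentiable ℝ f) (x v : E) (t : ℝ) :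
    HasDerivAt (fun s : ℝ => f (x + s • v)) ⟪gradient f (x + t • v), v⟫ t := by
  have h1 : HasDerivAt (fun s : ℝ => x + s • v) v t := by
    simpa using ((hasDerivAt_id t).smul_const v).const_add x
  have h2 := hasGradientAt_iff_hasFDerivAt.mp (hd (x + t • v)).hasGradientAt
  simpa [InnerProductSpace.toDual_apply_apply, Function.comp_def] using h2.comp_hasDerivAt t h1

lemma first_order_aux (f : E → ℝ) (hf : ConvexOn ℝ Set.univ f) (hd : Differentiable ℝ f)
    (x w : E) : f x + ⟪gradient f x, w - x⟫ ≤ f w := by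
  set v := w - x with hv
  have hq : ConvexOn ℝ Set.univ (fun t : ℝ => f (x + t • v)) := by
    have := hf.comp_affineMap (AffineMap.lineMap x w)
    convert (this.subset (subset_preimage_univ) convex_univ :
      ConvexOn ℝ Set.univ (f ∘ ⇑(AffineMap.lineMap x w))) using 2 with t
    case e'_4 | e'_5 | e'_6 | e'_9 => rfl
    simp [AffineMap.lineMap_apply_module, hv]
    congr 1
    module
  have hder := lineDeriv_aux f hd x v 0
  have h01 : (0:ℝ) < 1 := one_pos
  have := hq.le_slope_of_hasDerivAt (mem_univ (0:ℝ)) (mem_univ (1:ℝ)) h01 (by simpa using hder)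
  rw [slope_def_field] at this
  simp only [zero_smul, add_zero, one_smul] at this hder
  have : ⟪gradient f x, v⟫ ≤ f (x + v) - f x := by
    simpa [div_one] using this
  have hxv : x + v = w := by simp [hv]
  rw [hxv] at this; linarith

lemma descent_aux (f : E → ℝ) (L : ℝ) (hL : 0 < L) (hd : Differentiable ℝ f)
    (hlip : ∀ a b : E, ‖gradient f a - gradient f b‖ ≤ L * ‖a - b‖) (x y : E) :
    f y ≤ f x + ⟪gradient f x, y - x⟫ + L / 2 * ‖y - x‖ ^ 2 := by
  set v := y - x with hv
  have gcont : Continuous (gradient f) := by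
    refine (LipschitzWith.of_dist_le_mul (K := L.toNNReal) ?_).continuous
    intro a b
    rw [dist_eq_norm, dist_eq_norm]
    simpa [Real.coe_toNNReal _ hL.le] using hlip a b
  have hq : ∀ t : ℝ, HasDerivAt (fun s : ℝ => f (x + s • v)) ⟪gradient f (x + t • v), v⟫ t :=
    lineDeriv_aux f hd x v
  have qcont : Continuous fun t : ℝ => ⟪gradient f (x + t • v), v⟫ :=
    (gcont.comp (by continuity)).inner continuous_const
  have hint : f (x + (1:ℝ) • v) - f (x + (0:ℝ) • v)
      = ∫ t in (0:ℝ)..1, ⟪gradient f (x + t • v), v⟫ :=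
    (intervalIntegral.integral_eq_sub_of_hasDerivAt (fun t _ => hq t)
      (qcont.intervalIntegrable 0 1)).symm
  have hbound : ∀ t ∈ Set.Icc (0:ℝ) 1,
      ⟪gradient f (x + t • v), v⟫ ≤ ⟪gradient f x, v⟫ + L * ‖v‖ ^ 2 * t := by
    intro t ht
    have h1 : ⟪gradient f (x + t • v) - gradient f x, v⟫
        ≤ ‖gradient f (x + t • v) - gradient f x‖ * ‖v‖ := real_inner_le_norm _ _
    have h2 : ‖gradient f (x + t • v) - gradient f x‖ ≤ L * (t * ‖v‖) := by
      have := hlip (x + t • v) x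
      simpa [norm_smul, abs_of_nonneg ht.1] using this
    have h3 : ⟪gradient f (x + t • v) - gradient f x, v⟫ ≤ L * (t * ‖v‖) * ‖v‖ :=
      h1.trans (by nlinarith [norm_nonneg v])
    rw [inner_sub_left] at h3
    nlinarith [norm_nonneg v]
  have hmono : (∫ t in (0:ℝ)..1, ⟪gradient f (x + t • v), v⟫)
      ≤ ∫ t in (0:ℝ)..1, (⟪gradient f x, v⟫ + L * ‖v‖ ^ 2 * t) := by
    refine intervalIntegral.integral_mono_on zero_le_one (qcont.intervalIntegrable 0 1) ?_ hbound
    exact (Continuous.intervalIntegrable (by continuity) 0 1)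
  have hval : (∫ t in (0:ℝ)..1, (⟪gradient f x, v⟫ + L * ‖v‖ ^ 2 * t))
      = ⟪gradient f x, v⟫ + L * ‖v‖ ^ 2 * (1 / 2) := by
    rw [intervalIntegral.integral_add (intervalIntegrable_const)
      ((by continuity : Continuous fun t : ℝ => L * ‖v‖ ^ 2 * t).intervalIntegrable 0 1)]
    rw [intervalIntegral.integral_const_mul, integral_id]
    norm_num
  have hfin := (hint.trans_le hmono).trans_eq hval
  have hxv : x + v = y := by simp [hv]
  simp only [one_smul, zero_smul, add_zero, hxv] at hfin
  nlinarith [hfin]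

lemma key_aux (f : E → ℝ) (L : ℝ) (hL : 0 < L) (hf : ConvexOn ℝ Set.univ f)
    (hd : Differentiable ℝ f)
    (hlip : ∀ a b : E, ‖gradient f a - gradient f b‖ ≤ L * ‖a - b‖) (x y : E) :
    f x + ⟪gradient f x, y - x⟫ + 1 / (2 * L) * ‖gradient f y - gradient f x‖ ^ 2 ≤ f y := by
  set g := gradient f y - gradient f x with hg
  set z := y - (1 / L) • g with hz
  have h1 := first_order_aux f hf hd x z
  have h2 := descent_aux f L hL hd hlip y z
  have e1 : z - x = (y - x) - (1 / L) • g := by rw [hz]; abel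
  have e2 : z - y = -((1 / L) • g) := by rw [hz]; abel
  have i1 : ⟪gradient f x, z - x⟫
      = ⟪gradient f x, y - x⟫ - (1 / L) * ⟪gradient f x, g⟫ := by
    rw [e1, inner_sub_right, inner_smul_right]
  have i2 : ⟪gradient f y, z - y⟫ = -((1 / L) * ⟪gradient f y, g⟫) := by
    rw [e2, inner_neg_right, inner_smul_right]
  have i3 : ‖z - y‖ ^ 2 = (1 / L) ^ 2 * ‖g‖ ^ 2 := by
    rw [e2, norm_neg, norm_smul]
    rw [Real.norm_eq_abs, abs_of_nonneg (by positivity : (0:ℝ) ≤ 1 / L)]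
    ring
  have i4 : ⟪gradient f y, g⟫ - ⟪gradient f x, g⟫ = ‖g‖ ^ 2 := by
    rw [← inner_sub_left, ← hg, real_inner_self_eq_norm_sq]
  rw [i1] at h1
  rw [i2, i3] at h2
  have hL' : L ≠ 0 := ne_of_gt hL
  have expand : L / 2 * ((1 / L) ^ 2 * ‖g‖ ^ 2) = 1 / (2 * L) * ‖g‖ ^ 2 := by
    field_simp
  rw [expand] at h2
  have i5 : 1 / L * ⟪gradient f y, g⟫ - 1 / L * ⟪gradient f x, g⟫ = 1 / L * ‖g‖ ^ 2 := by
    rw [← mul_sub, i4]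
  have i6 : 1 / L * ‖g‖ ^ 2 - 1 / (2 * L) * ‖g‖ ^ 2 = 1 / (2 * L) * ‖g‖ ^ 2 := by
    field_simp; ring
  linarith

theorem stmt_7' (p : ℕ) (hp : 0 < p) (L : ℝ) (hL : 0 < L)
    (f : EuclideanSpace ℝ (Fin p) → ℝ)
    (hf : ConvexOn ℝ Set.univ f)
    (hfL : Differentiable ℝ f ∧ ∀ a b : EuclideanSpace ℝ (Fin p),
      ‖gradient f a - gradient f b‖ ≤ L * ‖a - b‖) :
    ∀ x y : EuclideanSpace ℝ (Fin p),
      ⟪gradient f x - gradient f y, x - y⟫ ≥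
        (1 / L) * ‖gradient f x - gradient f y‖ ^ 2 := by
  obtain ⟨hd, hlip⟩ := hfL
  intro x y
  have k1 := key_aux f L hL hf hd hlip x y
  have k2 := key_aux f L hL hf hd hlip y x
  have nsymm : ‖gradient f x - gradient f y‖ = ‖gradient f y - gradient f x‖ :=
    norm_sub_rev _ _
  have isum : ⟪gradient f x, y - x⟫ + ⟪gradient f y, x - y⟫
      = -⟪gradient f x - gradient f y, x - y⟫ := by
    rw [inner_sub_left]
    have : (y - x : EuclideanSpace ℝ (Fin p)) = -(x - y) := by abel
    rw [this, inner_neg_right]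
    ring
  have h2L : 1 / (2 * L) * ‖gradient f y - gradient f x‖ ^ 2
      + 1 / (2 * L) * ‖gradient f x - gradient f y‖ ^ 2
      = (1 / L) * ‖gradient f x - gradient f y‖ ^ 2 := by
    rw [nsymm]; field_simp; ring
  linarith [k1, k2]

end Aux

/-- co-coercivity of the gradient of an L-smooth convex function. -/
theorem stmt_7 (p : ℕ) (hp : 0 < p) (L : ℝ) (hL : 0 < L)
    (f : EuclideanSpace ℝ (Fin p) → ℝ)
    (hf : ConvexOn ℝ Set.univ f) (hfL : LSmooth L f) :
    ∀ x y : EuclideanSpace ℝ (Fin p),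
      ⟪gradient f x - gradient f y, x - y⟫ ≥
        (1 / L) * ‖gradient f x - gradient f y‖ ^ 2 := by
  exact stmt_7' p hp L hL f hf hfL
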